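/- Let A be a p × q real matrix (p ≤ q) whose columns a_j each satisfy max_i a_{ij} > 0, let a_j⁽⁰⁾ = max(a_j, 0) componentwise, and suppose Z₁, …, Z_q are independent nonnegative random variables each satisfying n P(Z_j > b_n z) → z^{−α} for z > 0. Then for the max-linear combination X = (max_{j} a_{1j} Z_j, …, max_j a_{pj} Z_j)ᵀ and any x > 0 (componentwise), n P(X ∈ b_n([0,x]ᶜ)) → Σ_{j=1}^q max_{i=1,…,p} (a_{ij}⁽⁰⁾/xᵢ)^α, which is the limit measure ν([0,x]ᶜ) associated with the discrete angular measure H = Σ_j ‖a_j⁽⁰⁾‖^α δ_{a_j⁽⁰⁾/‖a_j⁽⁰⁾‖}. -/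

import Mathlib

open MeasureTheory Filter

lemma telescope_prod (r : ℕ → ℝ) (m : ℕ) :
    1 - ∏ k ∈ Finset.range m, (1 - r k)
      = ∑ j ∈ Finset.range m, r j * ∏ k ∈ Finset.range j, (1 - r k) := by
  induction m with
  | zero => simp
  | succ m ih => rw [Finset.prod_range_succ, Finset.sum_range_succ, ← ih]; ring

/-- for a max-linear combination `Xᵢ = maxⱼ a_{ij} Zⱼ` of
independent regularly varying random variables, for every componentwise
positive `x`,
`n P(X ∈ b_n [0,x]ᶜ) → Σⱼ maxᵢ (a_{ij}⁽⁰⁾/xᵢ)^α`, the limit measure of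
`[0,x]ᶜ` for the discrete angular measure `H = Σⱼ ‖aⱼ⁽⁰⁾‖^α δ_{aⱼ⁽⁰⁾/‖aⱼ⁽⁰⁾‖}`. -/
theorem maxLinear_regular_variation
    (p q : ℕ) (α : ℝ) (hα : 0 < α)
    (A : Matrix (Fin (p+1)) (Fin (q+1)) ℝ)
    (hA : ∀ j, ∃ i, 0 < A i j)
    (Ω : Type*) [MeasurableSpace Ω] (ℙ : Measure Ω) [IsProbabilityMeasure ℙ]
    (Z : Fin (q+1) → Ω → ℝ)
    (hZmeas : ∀ j, Measurable (Z j))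
    (hZindep : ProbabilityTheory.iIndepFun Z ℙ)
    (hZnonneg : ∀ j ω, 0 ≤ Z j ω)
    (b : ℕ → ℝ) (hb : Tendsto b atTop atTop)
    (hZtail : ∀ j, ∀ z : ℝ, 0 < z →
      Tendsto (fun n : ℕ => (n : ℝ) * (ℙ {ω | b n * z < Z j ω}).toReal)
        atTop (nhds (z ^ (-α))))
    (x : Fin (p+1) → ℝ) (hx : ∀ i, 0 < x i) :
    Tendsto
      (fun n : ℕ => (n : ℝ) *
        (ℙ {ω | ∃ i, b n * x i < (Finset.univ.sup' Finset.univ_nonempty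
            (fun j => A i j * Z j ω))}).toReal)
      atTop
      (nhds (∑ j, (Finset.univ.sup' Finset.univ_nonempty
        (fun i => max (A i j) 0 / x i)) ^ α)) := by
  set c : Fin (q+1) → ℝ := fun j => Finset.univ.sup' Finset.univ_nonempty
    (fun i => max (A i j) 0 / x i) with hc_def
  have hc : ∀ j, 0 < c j := by
    intro j
    obtain ⟨i, hi⟩ := hA j
    have h1 : A i j / x i ≤ c j := by
      have := Finset.le_sup' (f := fun i => max (A i j) 0 / x i)
        (b := i) (Finset.mem_univ i)
      rwa [max_eq_left hi.le] at this
    exact lt_of_lt_of_le (div_pos hi (hx i)) h1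
  set S : ℕ → Fin (q+1) → Set Ω := fun n j => {ω | b n * (c j)⁻¹ < Z j ω} with hS_def
  have hmeasS : ∀ n j, MeasurableSet (S n j) :=
    fun n j => (hZmeas j) measurableSet_Ioi
  set P : ℕ → Fin (q+1) → ℝ := fun n j => (ℙ (S n j)).toReal with hP_def
  -- tail limit for each j
  have hPlim : ∀ j, Tendsto (fun n : ℕ => (n : ℝ) * P n j) atTop (nhds ((c j) ^ α)) := by
    intro j
    have := hZtail j (c j)⁻¹ (inv_pos.mpr (hc j))
    have h2 : ((c j)⁻¹ : ℝ) ^ (-α) = (c j) ^ α := by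
      rw [Real.inv_rpow (hc j).le, Real.rpow_neg (hc j).le, inv_inv]
    rwa [h2] at this
  have hP0 : ∀ j, Tendsto (fun n : ℕ => P n j) atTop (nhds 0) := by
    intro j
    have h1 : Tendsto (fun n : ℕ => ((n : ℝ) * P n j) * (n : ℝ)⁻¹) atTop
        (nhds ((c j ^ α) * 0)) :=
      (hPlim j).mul (tendsto_inv_atTop_zero.comp tendsto_natCast_atTop_atTop)
    rw [mul_zero] at h1
    apply h1.congr'
    filter_upwards [eventually_gt_atTop 0] with n hn
    field_simp
  -- nonneg entries extended to ℕ
  set Pn : ℕ → ℕ → ℝ := fun n k => if h : k < q + 1 then P n ⟨k, h⟩ else 0 with hPn_def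
  have hPnFin : ∀ n (j : Fin (q+1)), Pn n (j : ℕ) = P n j := by
    intro n j; simp only [hPn_def, dif_pos j.isLt, Fin.eta]
  -- the key eventual identity
  have hkey : ∀ᶠ n : ℕ in atTop,
      (n : ℝ) * (ℙ {ω | ∃ i, b n * x i < (Finset.univ.sup' Finset.univ_nonempty
            (fun j => A i j * Z j ω))}).toReal
        = ∑ k ∈ Finset.range (q+1),
            ((n : ℝ) * Pn n k) * ∏ l ∈ Finset.range k, (1 - Pn n l) := by
    filter_upwards [hb.eventually_gt_atTop 0] with n hbn
    -- set equality
    have hset : {ω | ∃ i, b n * x i < (Finset.univ.sup' Finset.univ_nonempty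
            (fun j => A i j * Z j ω))} = ⋃ j, S n j := by
      ext ω
      simp only [Set.mem_setOf_eq, Set.mem_iUnion, Finset.lt_sup'_iff, Finset.mem_univ,
        true_and, hS_def]
      constructor
      · rintro ⟨i, j, hij⟩
        refine ⟨j, ?_⟩
        have hxpos := hx i
        have hbx : 0 < b n * x i := mul_pos hbn hxpos
        have hApos : 0 < A i j := by
          by_contra h
          push_neg at h
          exact absurd (lt_of_lt_of_le hbx (hij.le)) (not_lt.mpr
            (mul_nonpos_of_nonpos_of_nonneg h (hZnonneg j ω)))
        have hcge : A i j / x i ≤ c j := by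
          have := Finset.le_sup' (f := fun i => max (A i j) 0 / x i)
            (b := i) (Finset.mem_univ i)
          rwa [max_eq_left hApos.le] at this
        have h1 : b n * (c j)⁻¹ ≤ b n * (A i j / x i)⁻¹ := by
          apply mul_le_mul_of_nonneg_left _ hbn.le
          exact inv_anti₀ (div_pos hApos hxpos) hcge
        refine lt_of_le_of_lt h1 ?_
        rw [inv_div, ← mul_div_assoc, div_lt_iff₀ hApos]
        linarith [hij]
      · rintro ⟨j, hj⟩
        obtain ⟨i, -, hi⟩ := Finset.exists_mem_eq_sup' (s := (Finset.univ : Finset (Fin (p+1))))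
          Finset.univ_nonempty (fun i => max (A i j) 0 / x i)
        have hci : c j = max (A i j) 0 / x i := hi
        have hmaxpos : 0 < max (A i j) 0 := by
          by_contra h
          push_neg at h
          have : c j ≤ 0 := by
            rw [hci]; exact div_nonpos_of_nonpos_of_nonneg h (hx i).le
          exact absurd (hc j) (not_lt.mpr this)
        have hApos : 0 < A i j := by
          rcases max_cases (A i j) 0 with ⟨h1, -⟩ | ⟨h1, h2⟩
          · rwa [h1] at hmaxpos
          · rw [h1] at hmaxpos; exact absurd hmaxpos (lt_irrefl 0)
        have hci' : c j = A i j / x i := by rw [hci, max_eq_left hApos.le]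
        refine ⟨i, j, ?_⟩
        have := hj
        rw [hci', inv_div, ← mul_div_assoc, div_lt_iff₀' hApos] at this
        exact this
    rw [hset]
    -- probability of union via independence
    have hcompl : (⋃ j, S n j) = (⋂ j, (S n j)ᶜ)ᶜ := by
      simp [Set.compl_iInter]
    have hindep : ℙ (⋂ j, (S n j)ᶜ) = ∏ j, ℙ ((S n j)ᶜ) := by
      apply hZindep.meas_iInter
      intro j
      exact ⟨Set.Iic (b n * (c j)⁻¹), measurableSet_Iic, by
        ext ω; simp [hS_def, not_lt]⟩
    have hPU : (ℙ (⋃ j, S n j)).toReal = 1 - ∏ j, (1 - P n j) := by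
      rw [hcompl, measure_compl (MeasurableSet.iInter (fun j => (hmeasS n j).compl))
        (measure_ne_top ℙ _), hindep]
      rw [ENNReal.toReal_sub_of_le (by
          calc ∏ j, ℙ ((S n j)ᶜ) ≤ ∏ j : Fin (q+1), 1 :=
            Finset.prod_le_prod (fun _ _ => zero_le) (fun j _ => prob_le_one)
          _ = 1 := by simp
          _ = ℙ Set.univ := (measure_univ).symm) (measure_ne_top ℙ _)]
      rw [measure_univ, ENNReal.toReal_one, ENNReal.toReal_prod]
      congr 1
      apply Finset.prod_congr rfl
      intro j _
      rw [measure_compl (hmeasS n j) (measure_ne_top ℙ _), measure_univ,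
        ENNReal.toReal_sub_of_le prob_le_one (by simp), ENNReal.toReal_one]
    rw [hPU]
    have hprodeq : ∏ j : Fin (q+1), (1 - P n j) = ∏ k ∈ Finset.range (q+1), (1 - Pn n k) := by
      rw [← Fin.prod_univ_eq_prod_range (fun k => 1 - Pn n k) (q+1)]
      exact Finset.prod_congr rfl (fun j _ => by rw [hPnFin])
    rw [hprodeq, telescope_prod, Finset.mul_sum]
    exact Finset.sum_congr rfl (fun k _ => by ring)
  -- conclude
  rw [show (∑ j, (Finset.univ.sup' Finset.univ_nonempty
        (fun i => max (A i j) 0 / x i)) ^ α) = ∑ j : Fin (q+1), (c j) ^ α from rfl]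
  have hsum : (∑ j : Fin (q+1), (c j) ^ α)
      = ∑ k ∈ Finset.range (q+1), (fun k => if h : k < q+1 then (c ⟨k,h⟩) ^ α else 0) k := by
    rw [← Fin.sum_univ_eq_sum_range]
    exact Finset.sum_congr rfl (fun j _ => by simp [j.isLt])
  rw [hsum]
  apply Tendsto.congr' (Filter.EventuallyEq.symm hkey)
  apply tendsto_finset_sum
  intro k hk
  rw [Finset.mem_range] at hk
  simp only [dif_pos hk]
  have h1 : Tendsto (fun n : ℕ => (n : ℝ) * Pn n k) atTop (nhds ((c ⟨k, hk⟩) ^ α)) := by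
    have := hPlim ⟨k, hk⟩
    apply this.congr
    intro n
    simp only [hPn_def, dif_pos hk]
  have h2 : Tendsto (fun n : ℕ => ∏ l ∈ Finset.range k, (1 - Pn n l)) atTop (nhds 1) := by
    have : Tendsto (fun n : ℕ => ∏ l ∈ Finset.range k, (1 - Pn n l)) atTop
        (nhds (∏ l ∈ Finset.range k, (1 - 0 : ℝ))) := by
      apply tendsto_finset_prod
      intro l hl
      rw [Finset.mem_range] at hl
      have hl' : l < q + 1 := hl.trans hk
      have := hP0 ⟨l, hl'⟩
      exact (tendsto_const_nhds.sub (this.congr (fun n => by simp only [hPn_def, dif_pos hl'])))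
    simpa using this
  have := h1.mul h2
  rwa [mul_one] at this
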